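/- The LP relaxation distance d̄_p^{(c,γ)} satisfies the triangle inequality: for all finite sets of trajectories X, Y, Z over time steps 1..T, d̄_p^{(c,γ)}(X,Y) ≤ d̄_p^{(c,γ)}(X,Z) + d̄_p^{(c,γ)}(Z,Y). -/

import Mathlib

open Finset

/-- A trajectory in ℝ^N. -/
structure Traj (N : ℕ) where
  ω : ℕ
  ν : ℕ
  x : Fin ν → (Fin N → ℝ)

/-- The (possibly empty) state of the trajectory at time `k`. -/
def tau {N : ℕ} (X : Traj N) (k : ℕ) : Option (Fin N → ℝ) :=
  if h : X.ω ≤ k ∧ k < X.ω + X.ν then some (X.x ⟨k - X.ω, by omega⟩) else none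

/-- Base metric of Definition 1 on at-most-one-element subsets of ℝ^N. -/
noncomputable def dOpt {N : ℕ} (db : (Fin N → ℝ) → (Fin N → ℝ) → ℝ) (c p : ℝ) :
    Option (Fin N → ℝ) → Option (Fin N → ℝ) → ℝ
  | some x, some y => min c (db x y)
  | none, none => 0
  | _, _ => c / (2 : ℝ) ^ (1 / p)

/-- The state of the `i`-th trajectory at time `k`, where the extra index
`n_X + 1` stands for "unassigned" and yields the empty set. -/
def tauE {N n : ℕ} (X : Fin n → Traj N) (i : Fin (n + 1)) (k : ℕ) :
    Option (Fin N → ℝ) :=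
  if h : (i : ℕ) < n then tau (X ⟨i, h⟩) k else none

/-- The relaxed assignment polytope `W̄_{X,Y}` (Eqs. (18)-(21), (23)). -/
def memWbar {m n : ℕ} (W : Matrix (Fin (m + 1)) (Fin (n + 1)) ℝ) : Prop :=
  (∀ i j, 0 ≤ W i j) ∧
  (∀ j : Fin n, ∑ i, W i j.castSucc = 1) ∧
  (∀ i : Fin m, ∑ j, W i.castSucc j = 1) ∧
  W (Fin.last m) (Fin.last n) = 0

/-- The binary assignment set `W_{X,Y}` (Eqs. (18)-(21)). -/
def memWbin {m n : ℕ} (W : Matrix (Fin (m + 1)) (Fin (n + 1)) ℝ) : Prop :=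
  memWbar W ∧ ∀ i j, W i j = 0 ∨ W i j = 1

/-- The cost functional of Lemma 1 / Definition 6: localization cost plus
switching cost of a sequence of (possibly soft) assignment matrices. -/
noncomputable def lpCost {N nX nY : ℕ} (db : (Fin N → ℝ) → (Fin N → ℝ) → ℝ)
    (c γ p : ℝ) (T : ℕ) (X : Fin nX → Traj N) (Y : Fin nY → Traj N)
    (W : ℕ → Matrix (Fin (nX + 1)) (Fin (nY + 1)) ℝ) : ℝ :=
  (∑ k ∈ Finset.range T, ∑ i, ∑ j,
      (dOpt db c p (tauE X i k) (tauE Y j k)) ^ p * W k i j) +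
  γ ^ p / 2 * ∑ k ∈ Finset.range (T - 1), ∑ i : Fin nX, ∑ j : Fin nY,
      |W k i.castSucc j.castSucc - W (k + 1) i.castSucc j.castSucc|

/-- The multi-dimensional assignment distance in its binary LP form (Eq. (16)). -/
noncomputable def mdDistBin {N nX nY : ℕ} (db : (Fin N → ℝ) → (Fin N → ℝ) → ℝ)
    (c γ p : ℝ) (T : ℕ) (X : Fin nX → Traj N) (Y : Fin nY → Traj N) : ℝ :=
  sInf { v | ∃ W : ℕ → Matrix (Fin (nX + 1)) (Fin (nY + 1)) ℝ,
    (∀ k < T, memWbin (W k)) ∧ v = (lpCost db c γ p T X Y W) ^ (1 / p) }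

/-- The LP relaxation distance (Definition 6, Eq. (22)). -/
noncomputable def lpDist {N nX nY : ℕ} (db : (Fin N → ℝ) → (Fin N → ℝ) → ℝ)
    (c γ p : ℝ) (T : ℕ) (X : Fin nX → Traj N) (Y : Fin nY → Traj N) : ℝ :=
  sInf { v | ∃ W : ℕ → Matrix (Fin (nX + 1)) (Fin (nY + 1)) ℝ,
    (∀ k < T, memWbar (W k)) ∧ v = (lpCost db c γ p T X Y W) ^ (1 / p) }



/-- Weighted Minkowski inequality for finite sums. -/
lemma weighted_Lp_add_le {ι : Type*} (s : Finset ι) (μ f g : ι → ℝ) {p : ℝ} (hp : 1 ≤ p)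
    (hμ : ∀ i ∈ s, 0 ≤ μ i) (hf : ∀ i ∈ s, 0 ≤ f i) (hg : ∀ i ∈ s, 0 ≤ g i) :
    (∑ i ∈ s, μ i * (f i + g i) ^ p) ^ (1 / p) ≤
      (∑ i ∈ s, μ i * f i ^ p) ^ (1 / p) + (∑ i ∈ s, μ i * g i ^ p) ^ (1 / p) := by
  have hp0 : p ≠ 0 := by intro h; rw [h] at hp; norm_num at hp
  have conv : ∀ h : ι → ℝ, (∀ i ∈ s, 0 ≤ h i) →
      ∑ i ∈ s, μ i * h i ^ p = ∑ i ∈ s, (h i * μ i ^ (1 / p)) ^ p := by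
    intro h hh
    refine Finset.sum_congr rfl fun i hi => ?_
    rw [Real.mul_rpow (hh i hi) (Real.rpow_nonneg (hμ i hi) _), ← Real.rpow_mul (hμ i hi),
      one_div_mul_cancel hp0, Real.rpow_one, mul_comm]
  rw [conv f hf, conv g hg,
    conv (fun i => f i + g i) (fun i hi => add_nonneg (hf i hi) (hg i hi))]
  have H := Real.Lp_add_le_of_nonneg (f := fun i => f i * μ i ^ (1 / p))
    (g := fun i => g i * μ i ^ (1 / p)) s hp
    (fun i hi => mul_nonneg (hf i hi) (Real.rpow_nonneg (hμ i hi) _))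
    (fun i hi => mul_nonneg (hg i hi) (Real.rpow_nonneg (hμ i hi) _))
  simpa only [add_mul] using H
lemma dOpt_nonneg {N : ℕ} {db : (Fin N → ℝ) → (Fin N → ℝ) → ℝ} {c p : ℝ}
    (hc : 0 ≤ c) (hdb : ∀ x y, 0 ≤ db x y) (x y : Option (Fin N → ℝ)) :
    0 ≤ dOpt db c p x y := by
  have he : (0:ℝ) ≤ c / (2:ℝ) ^ (1/p) := div_nonneg hc (Real.rpow_nonneg (by norm_num) _)
  rcases x with _ | a <;> rcases y with _ | b <;> simp only [dOpt] <;>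
    first
      | exact le_refl 0
      | exact he
      | exact le_min hc (hdb _ _)

lemma dOpt_none_none {N : ℕ} {db : (Fin N → ℝ) → (Fin N → ℝ) → ℝ} {c p : ℝ} :
    dOpt db c p none none = 0 := rfl

lemma dOpt_triangle {N : ℕ} {db : (Fin N → ℝ) → (Fin N → ℝ) → ℝ} {c p : ℝ}
    (hc : 0 < c) (hp : 1 ≤ p)
    (hdb : ∀ x y, 0 ≤ db x y) (htri : ∀ x y z, db x z ≤ db x y + db y z)
    (x y z : Option (Fin N → ℝ)) :
    dOpt db c p x z ≤ dOpt db c p x y + dOpt db c p y z := by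
  have hp0 : (0:ℝ) < p := lt_of_lt_of_le one_pos hp
  have h2 : (0:ℝ) < (2:ℝ) ^ (1/p) := Real.rpow_pos_of_pos two_pos _
  have he : (0:ℝ) ≤ c / (2:ℝ) ^ (1/p) := le_of_lt (div_pos hc h2)
  have hle : (2:ℝ) ^ (1/p) ≤ 2 := by
    calc (2:ℝ) ^ (1/p) ≤ (2:ℝ) ^ (1:ℝ) :=
          Real.rpow_le_rpow_of_exponent_le one_le_two (by rw [div_le_one hp0]; exact hp)
      _ = 2 := Real.rpow_one 2
  have hcc : c ≤ c / (2:ℝ) ^ (1/p) + c / (2:ℝ) ^ (1/p) := by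
    rw [← add_div, le_div_iff₀ h2]; nlinarith
  have hmin0 : ∀ u v, (0:ℝ) ≤ min c (db u v) := fun u v => le_min hc.le (hdb u v)
  rcases x with _ | a <;> rcases y with _ | b <;> rcases z with _ | d <;>
    simp only [dOpt]
  · linarith
  · linarith
  · linarith
  · linarith [hmin0 b d]
  · linarith
  · linarith [min_le_left c (db a d)]
  · linarith [hmin0 a b]
  · rcases le_or_gt c (db a b) with h | h
    · rw [min_eq_left h]
      linarith [min_le_left c (db a d), hmin0 b d]
    · rcases le_or_gt c (db b d) with h' | h'
      · rw [min_eq_left h']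
        linarith [min_le_left c (db a d), hmin0 a b]
      · rw [min_eq_right h.le, min_eq_right h'.le]
        linarith [min_le_right c (db a d), htri a b d]
lemma lpCost_nonneg {N nX nY : ℕ} {db : (Fin N → ℝ) → (Fin N → ℝ) → ℝ} {c γ p : ℝ}
    (hc : 0 ≤ c) (hγ : 0 ≤ γ) (hdb : ∀ x y, 0 ≤ db x y) (T : ℕ)
    (X : Fin nX → Traj N) (Y : Fin nY → Traj N)
    (W : ℕ → Matrix (Fin (nX + 1)) (Fin (nY + 1)) ℝ) (hW : ∀ k < T, memWbar (W k)) :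
    0 ≤ lpCost db c γ p T X Y W := by
  apply add_nonneg
  · refine Finset.sum_nonneg fun k hk => Finset.sum_nonneg fun i _ =>
      Finset.sum_nonneg fun j _ => mul_nonneg ?_ ?_
    · exact Real.rpow_nonneg (dOpt_nonneg hc hdb _ _) p
    · exact (hW k (Finset.mem_range.1 hk)).1 i j
  · refine mul_nonneg (div_nonneg (Real.rpow_nonneg hγ _) (by norm_num)) ?_
    exact Finset.sum_nonneg fun k _ => Finset.sum_nonneg fun i _ =>
      Finset.sum_nonneg fun j _ => abs_nonneg _

lemma exists_memWbar (m n : ℕ) : ∃ W : Matrix (Fin (m + 1)) (Fin (n + 1)) ℝ, memWbar W := by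
  classical
  refine ⟨Matrix.of fun i j =>
    if i = Fin.last m then (if j = Fin.last n then 0 else 1)
    else (if j = Fin.last n then 1 else 0), ?_, ?_, ?_, ?_⟩
  · intro i j
    simp only [Matrix.of_apply]
    split <;> split <;> norm_num
  · intro j
    have hj : (j.castSucc : Fin (n + 1)) ≠ Fin.last n := (Fin.castSucc_lt_last j).ne
    rw [Fin.sum_univ_castSucc]
    simp [hj, fun i : Fin m => (Fin.castSucc_lt_last i).ne]
  · intro i
    have hi : (i.castSucc : Fin (m + 1)) ≠ Fin.last m := (Fin.castSucc_lt_last i).ne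
    rw [Fin.sum_univ_castSucc]
    simp [hi, fun j : Fin n => (Fin.castSucc_lt_last j).ne]
  · simp

lemma lpDist_nonempty_bdd {N nX nY : ℕ} (db : (Fin N → ℝ) → (Fin N → ℝ) → ℝ)
    {c γ p : ℝ} (hc : 0 ≤ c) (hγ : 0 ≤ γ) (hdb : ∀ x y, 0 ≤ db x y)
    (T : ℕ) (X : Fin nX → Traj N) (Y : Fin nY → Traj N) :
    ({ v | ∃ W : ℕ → Matrix (Fin (nX + 1)) (Fin (nY + 1)) ℝ,
        (∀ k < T, memWbar (W k)) ∧ v = (lpCost db c γ p T X Y W) ^ (1 / p) }.Nonempty) ∧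
    (0 ∈ lowerBounds { v | ∃ W : ℕ → Matrix (Fin (nX + 1)) (Fin (nY + 1)) ℝ,
        (∀ k < T, memWbar (W k)) ∧ v = (lpCost db c γ p T X Y W) ^ (1 / p) }) := by
  constructor
  · obtain ⟨W0, hW0⟩ := exists_memWbar nX nY
    exact ⟨_, fun _ => W0, fun k _ => hW0, rfl⟩
  · rintro v ⟨W, hW, rfl⟩
    exact Real.rpow_nonneg (lpCost_nonneg hc hγ hdb T X Y W hW) _
section Comp

variable {nX nY nZ : ℕ}

/-- "Real-path" part of the composed assignment matrix. -/
noncomputable def compA (W1 : Matrix (Fin (nX + 1)) (Fin (nZ + 1)) ℝ)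
    (W2 : Matrix (Fin (nZ + 1)) (Fin (nY + 1)) ℝ) (i : Fin (nX + 1)) (j : Fin (nY + 1)) : ℝ :=
  ∑ l : Fin nZ, W1 i l.castSucc * W2 l.castSucc j

/-- "Dummy-path" part of the composed assignment matrix. -/
noncomputable def compB (W1 : Matrix (Fin (nX + 1)) (Fin (nZ + 1)) ℝ)
    (W2 : Matrix (Fin (nZ + 1)) (Fin (nY + 1)) ℝ) (i : Fin (nX + 1)) (j : Fin (nY + 1)) : ℝ :=
  (if j = Fin.last nY then W1 i (Fin.last nZ) else 0) +
  (if i = Fin.last nX then W2 (Fin.last nZ) j else 0)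

/-- The composed assignment matrix. -/
noncomputable def compW (W1 : Matrix (Fin (nX + 1)) (Fin (nZ + 1)) ℝ)
    (W2 : Matrix (Fin (nZ + 1)) (Fin (nY + 1)) ℝ) :
    Matrix (Fin (nX + 1)) (Fin (nY + 1)) ℝ :=
  Matrix.of fun i j =>
    if i = Fin.last nX ∧ j = Fin.last nY then 0 else compA W1 W2 i j + compB W1 W2 i j

variable {W1 : Matrix (Fin (nX + 1)) (Fin (nZ + 1)) ℝ}
  {W2 : Matrix (Fin (nZ + 1)) (Fin (nY + 1)) ℝ}

lemma compW_castSucc (i : Fin nX) (j : Fin nY) :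
    compW W1 W2 i.castSucc j.castSucc = compA W1 W2 i.castSucc j.castSucc := by
  have hi : (i.castSucc : Fin (nX + 1)) ≠ Fin.last nX := (Fin.castSucc_lt_last i).ne
  have hj : (j.castSucc : Fin (nY + 1)) ≠ Fin.last nY := (Fin.castSucc_lt_last j).ne
  simp [compW, compB, hi, hj]

lemma compW_mem (h1 : memWbar W1) (h2 : memWbar W2) : memWbar (compW W1 W2) := by
  classical
  obtain ⟨h1n, h1c, h1r, h1z⟩ := h1
  obtain ⟨h2n, h2c, h2r, h2z⟩ := h2
  refine ⟨?_, ?_, ?_, ?_⟩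
  · intro i j
    simp only [compW, Matrix.of_apply]
    split
    · exact le_refl 0
    · refine add_nonneg (Finset.sum_nonneg fun l _ => mul_nonneg (h1n _ _) (h2n _ _)) ?_
      refine add_nonneg ?_ ?_ <;> split <;> first | exact h1n _ _ | exact h2n _ _ | exact le_refl 0
  · intro j
    have hj : (j.castSucc : Fin (nY + 1)) ≠ Fin.last nY := (Fin.castSucc_lt_last j).ne
    have e1 : ∀ i, compW W1 W2 i j.castSucc = compA W1 W2 i j.castSucc + compB W1 W2 i j.castSucc := by
      intro i
      simp only [compW, Matrix.of_apply]
      rw [if_neg]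
      exact fun h => hj h.2
    calc ∑ i, compW W1 W2 i j.castSucc
        = (∑ i, compA W1 W2 i j.castSucc) + ∑ i, compB W1 W2 i j.castSucc := by
          rw [← Finset.sum_add_distrib]; exact Finset.sum_congr rfl fun i _ => e1 i
      _ = (∑ l : Fin nZ, W2 l.castSucc j.castSucc) + W2 (Fin.last nZ) j.castSucc := by
          congr 1
          · simp only [compA]
            rw [Finset.sum_comm]
            refine Finset.sum_congr rfl fun l _ => ?_
            rw [← Finset.sum_mul, h1c l, one_mul]
          · simp [compB, hj]
      _ = ∑ l, W2 l j.castSucc := (Fin.sum_univ_castSucc fun l => W2 l j.castSucc).symm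
      _ = 1 := h2c j
  · intro i
    have hi : (i.castSucc : Fin (nX + 1)) ≠ Fin.last nX := (Fin.castSucc_lt_last i).ne
    have e1 : ∀ j, compW W1 W2 i.castSucc j = compA W1 W2 i.castSucc j + compB W1 W2 i.castSucc j := by
      intro j
      simp only [compW, Matrix.of_apply]
      rw [if_neg]
      exact fun h => hi h.1
    calc ∑ j, compW W1 W2 i.castSucc j
        = (∑ j, compA W1 W2 i.castSucc j) + ∑ j, compB W1 W2 i.castSucc j := by
          rw [← Finset.sum_add_distrib]; exact Finset.sum_congr rfl fun j _ => e1 j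
      _ = (∑ l : Fin nZ, W1 i.castSucc l.castSucc) + W1 i.castSucc (Fin.last nZ) := by
          congr 1
          · simp only [compA]
            rw [Finset.sum_comm]
            refine Finset.sum_congr rfl fun l _ => ?_
            rw [← Finset.mul_sum, h2r l, mul_one]
          · simp [compB, hi]
      _ = ∑ l, W1 i.castSucc l := (Fin.sum_univ_castSucc fun l => W1 i.castSucc l).symm
      _ = 1 := h1r i
  · simp [compW]

end Comp
lemma half_mul_sum3 {α β : Type*} [Fintype α] [Fintype β] (m : ℕ) (F : ℕ → α → β → ℝ) (r : ℝ) :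
    ∑ k ∈ Finset.range m, ∑ a, ∑ b, F k a b / 2 * r
      = r / 2 * ∑ k ∈ Finset.range m, ∑ a, ∑ b, F k a b := by
  rw [Finset.mul_sum]
  refine Finset.sum_congr rfl fun k _ => ?_
  rw [Finset.mul_sum]
  refine Finset.sum_congr rfl fun a _ => ?_
  rw [Finset.mul_sum]
  exact Finset.sum_congr rfl fun b _ => by ring

lemma sum3_rot {α β γ : Type*} [Fintype α] [Fintype β] [Fintype γ] (F : α → β → γ → ℝ) :
    ∑ a, ∑ b, ∑ c, F a b c = ∑ c, ∑ b, ∑ a, F a b c := by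
  calc ∑ a, ∑ b, ∑ c, F a b c
      = ∑ b, ∑ a, ∑ c, F a b c := Finset.sum_comm
    _ = ∑ b, ∑ c, ∑ a, F a b c := Finset.sum_congr rfl fun _ _ => Finset.sum_comm
    _ = ∑ c, ∑ b, ∑ a, F a b c := Finset.sum_comm
lemma minkowski4 {A B C D : Type*} (sA : Finset A) (sB : Finset B) (sC : Finset C) (sD : Finset D)
    {p : ℝ} (hp : 1 ≤ p)
    (μa fa ga : A → ℝ) (μb fb gb : B → ℝ) (μc fc gc : C → ℝ) (μd fd gd : D → ℝ)
    (hμa : ∀ x ∈ sA, 0 ≤ μa x) (hfa : ∀ x ∈ sA, 0 ≤ fa x) (hga : ∀ x ∈ sA, 0 ≤ ga x)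
    (hμb : ∀ x ∈ sB, 0 ≤ μb x) (hfb : ∀ x ∈ sB, 0 ≤ fb x) (hgb : ∀ x ∈ sB, 0 ≤ gb x)
    (hμc : ∀ x ∈ sC, 0 ≤ μc x) (hfc : ∀ x ∈ sC, 0 ≤ fc x) (hgc : ∀ x ∈ sC, 0 ≤ gc x)
    (hμd : ∀ x ∈ sD, 0 ≤ μd x) (hfd : ∀ x ∈ sD, 0 ≤ fd x) (hgd : ∀ x ∈ sD, 0 ≤ gd x) :
    ((∑ x ∈ sA, μa x * (fa x + ga x) ^ p) + ((∑ x ∈ sB, μb x * (fb x + gb x) ^ p)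
      + ((∑ x ∈ sC, μc x * (fc x + gc x) ^ p) + (∑ x ∈ sD, μd x * (fd x + gd x) ^ p)))) ^ (1 / p)
    ≤ ((∑ x ∈ sA, μa x * fa x ^ p) + ((∑ x ∈ sB, μb x * fb x ^ p)
      + ((∑ x ∈ sC, μc x * fc x ^ p) + (∑ x ∈ sD, μd x * fd x ^ p)))) ^ (1 / p)
      + ((∑ x ∈ sA, μa x * ga x ^ p) + ((∑ x ∈ sB, μb x * gb x ^ p)
      + ((∑ x ∈ sC, μc x * gc x ^ p) + (∑ x ∈ sD, μd x * gd x ^ p)))) ^ (1 / p) := by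
  have mem : ∀ {μa' : A → ℝ} {μb' : B → ℝ} {μc' : C → ℝ} {μd' : D → ℝ},
      (∀ x ∈ sA, 0 ≤ μa' x) → (∀ x ∈ sB, 0 ≤ μb' x) → (∀ x ∈ sC, 0 ≤ μc' x) →
      (∀ x ∈ sD, 0 ≤ μd' x) →
      ∀ x ∈ sA.disjSum (sB.disjSum (sC.disjSum sD)),
        0 ≤ Sum.elim μa' (Sum.elim μb' (Sum.elim μc' μd')) x := by
    intro μa' μb' μc' μd' ha hb hc' hd x hx
    rcases x with a | b | c | d <;>
      simp only [Finset.mem_disjSum] at hx <;>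
      simp only [Sum.elim_inl, Sum.elim_inr]
    · exact ha a (by simpa using hx)
    · exact hb b (by simpa using hx)
    · exact hc' c (by simpa using hx)
    · exact hd d (by simpa using hx)
  have H := weighted_Lp_add_le (sA.disjSum (sB.disjSum (sC.disjSum sD)))
    (Sum.elim μa (Sum.elim μb (Sum.elim μc μd)))
    (Sum.elim fa (Sum.elim fb (Sum.elim fc fd)))
    (Sum.elim ga (Sum.elim gb (Sum.elim gc gd))) hp
    (mem hμa hμb hμc hμd) (mem hfa hfb hfc hfd) (mem hga hgb hgc hgd)
  simpa only [Finset.sum_disjSum, Sum.elim_inl, Sum.elim_inr] using H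
lemma tauE_last {N n : ℕ} (Z : Fin n → Traj N) (k : ℕ) : tauE Z (Fin.last n) k = none := by
  simp [tauE]

lemma compose_le {N nX nY nZ : ℕ} (db : (Fin N → ℝ) → (Fin N → ℝ) → ℝ)
    {c γ p : ℝ} (hc : 0 < c) (hγ : 0 < γ) (hp : 1 ≤ p)
    (hdb_nonneg : ∀ x y, 0 ≤ db x y)
    (hdb_tri : ∀ x y z, db x z ≤ db x y + db y z)
    (T : ℕ) (X : Fin nX → Traj N) (Y : Fin nY → Traj N) (Z : Fin nZ → Traj N)
    (W1 : ℕ → Matrix (Fin (nX + 1)) (Fin (nZ + 1)) ℝ)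
    (W2 : ℕ → Matrix (Fin (nZ + 1)) (Fin (nY + 1)) ℝ)
    (h1 : ∀ k < T, memWbar (W1 k)) (h2 : ∀ k < T, memWbar (W2 k)) :
    lpCost db c γ p T X Y (fun k => compW (W1 k) (W2 k)) ^ (1 / p) ≤
      lpCost db c γ p T X Z W1 ^ (1 / p) + lpCost db c γ p T Z Y W2 ^ (1 / p) := by
  classical
  have hp0 : (0:ℝ) < p := lt_of_lt_of_le one_pos hp
  have hWfeas : ∀ k < T, memWbar (compW (W1 k) (W2 k)) :=
    fun k hk => compW_mem (h1 k hk) (h2 k hk)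
  have hd0 : ∀ (x y : Option (Fin N → ℝ)), 0 ≤ dOpt db c p x y :=
    dOpt_nonneg hc.le hdb_nonneg
  have memA : ∀ {α : Type} [Fintype α] (x : ℕ × α) (m : ℕ),
      x ∈ Finset.range m ×ˢ (Finset.univ : Finset α) → x.1 < m := by
    intro α _inst x m hx
    exact Finset.mem_range.1 (Finset.mem_product.1 hx).1
  refine le_trans
    (Real.rpow_le_rpow (lpCost_nonneg hc.le hγ.le hdb_nonneg T X Y _ hWfeas) ?hXY
      (by positivity))
    (le_trans
      (minkowski4
        (Finset.range T ×ˢ (Finset.univ : Finset (Fin (nX+1) × Fin nZ × Fin (nY+1))))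
        (Finset.range T ×ˢ (Finset.univ : Finset (Fin (nX+1) × Fin (nY+1))))
        (Finset.range (T-1) ×ˢ (Finset.univ : Finset (Fin nX × Fin nZ)))
        (Finset.range (T-1) ×ˢ (Finset.univ : Finset (Fin nZ × Fin nY)))
        hp
        (fun x => W1 x.1 x.2.1 x.2.2.1.castSucc * W2 x.1 x.2.2.1.castSucc x.2.2.2)
        (fun x => dOpt db c p (tauE X x.2.1 x.1) (tauE Z x.2.2.1.castSucc x.1))
        (fun x => dOpt db c p (tauE Z x.2.2.1.castSucc x.1) (tauE Y x.2.2.2 x.1))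
        (fun x => compB (W1 x.1) (W2 x.1) x.2.1 x.2.2)
        (fun x => dOpt db c p (tauE X x.2.1 x.1) (tauE Z (Fin.last nZ) x.1))
        (fun x => dOpt db c p (tauE Z (Fin.last nZ) x.1) (tauE Y x.2.2 x.1))
        (fun x => |W1 x.1 x.2.1.castSucc x.2.2.castSucc - W1 (x.1+1) x.2.1.castSucc x.2.2.castSucc| / 2)
        (fun _ => γ) (fun _ => 0)
        (fun x => |W2 x.1 x.2.1.castSucc x.2.2.castSucc - W2 (x.1+1) x.2.1.castSucc x.2.2.castSucc| / 2)
        (fun _ => 0) (fun _ => γ)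
        (fun x hx => mul_nonneg ((h1 x.1 (memA x T hx)).1 _ _) ((h2 x.1 (memA x T hx)).1 _ _))
        (fun x _ => hd0 _ _) (fun x _ => hd0 _ _)
        (fun x hx => by
          have hk := memA x T hx
          refine add_nonneg ?_ ?_ <;> split <;>
            first | exact (h1 x.1 hk).1 _ _ | exact (h2 x.1 hk).1 _ _ | exact le_refl 0)
        (fun x _ => hd0 _ _) (fun x _ => hd0 _ _)
        (fun x _ => div_nonneg (abs_nonneg _) (by norm_num))
        (fun _ _ => hγ.le) (fun _ _ => le_refl 0)
        (fun x _ => div_nonneg (abs_nonneg _) (by norm_num))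
        (fun _ _ => le_refl 0) (fun _ _ => hγ.le))
      (add_le_add (Real.rpow_le_rpow ?nF ?hSF (by positivity))
        (Real.rpow_le_rpow ?nG ?hSG (by positivity))))
  case hXY =>
    simp only [lpCost, Finset.sum_product, Fintype.sum_prod_type, add_zero, zero_add]
    have hloc : ∑ k ∈ Finset.range T, ∑ i : Fin (nX+1), ∑ j : Fin (nY+1),
        dOpt db c p (tauE X i k) (tauE Y j k) ^ p * compW (W1 k) (W2 k) i j
        ≤ (∑ k ∈ Finset.range T, ∑ i : Fin (nX+1), ∑ l : Fin nZ, ∑ j : Fin (nY+1),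
            W1 k i l.castSucc * W2 k l.castSucc j *
              (dOpt db c p (tauE X i k) (tauE Z l.castSucc k)
                + dOpt db c p (tauE Z l.castSucc k) (tauE Y j k)) ^ p)
          + ∑ k ∈ Finset.range T, ∑ i : Fin (nX+1), ∑ j : Fin (nY+1),
            compB (W1 k) (W2 k) i j *
              (dOpt db c p (tauE X i k) (tauE Z (Fin.last nZ) k)
                + dOpt db c p (tauE Z (Fin.last nZ) k) (tauE Y j k)) ^ p := by
      rw [← Finset.sum_add_distrib]
      refine Finset.sum_le_sum fun k hk => ?_
      have hk' := Finset.mem_range.1 hk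
      rw [← Finset.sum_add_distrib]
      refine Finset.sum_le_sum fun i _ => ?_
      rw [Finset.sum_comm]
      rw [← Finset.sum_add_distrib]
      refine Finset.sum_le_sum fun j _ => ?_
      by_cases hij : i = Fin.last nX ∧ j = Fin.last nY
      · have hz : compW (W1 k) (W2 k) i j = 0 := by simp [compW, hij]
        rw [hz, mul_zero]
        refine add_nonneg (Finset.sum_nonneg fun l _ => mul_nonneg
          (mul_nonneg ((h1 k hk').1 _ _) ((h2 k hk').1 _ _))
          (Real.rpow_nonneg (add_nonneg (hd0 _ _) (hd0 _ _)) _)) (mul_nonneg ?_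
          (Real.rpow_nonneg (add_nonneg (hd0 _ _) (hd0 _ _)) _))
        refine add_nonneg ?_ ?_ <;> split <;>
          first | exact (h1 k hk').1 _ _ | exact (h2 k hk').1 _ _ | exact le_refl 0
      · have hz : compW (W1 k) (W2 k) i j
            = compA (W1 k) (W2 k) i j + compB (W1 k) (W2 k) i j := by
          simp only [compW, Matrix.of_apply, if_neg hij]
        rw [hz, mul_add]
        refine add_le_add ?_ ?_
        · rw [compA, Finset.mul_sum]
          refine Finset.sum_le_sum fun l _ => ?_
          rw [mul_comm]
          refine mul_le_mul_of_nonneg_left ?_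
            (mul_nonneg ((h1 k hk').1 _ _) ((h2 k hk').1 _ _))
          exact Real.rpow_le_rpow (hd0 _ _)
            (dOpt_triangle hc hp hdb_nonneg hdb_tri _ _ _) hp0.le
        · rw [mul_comm]
          refine mul_le_mul_of_nonneg_left ?_ ?_
          · exact Real.rpow_le_rpow (hd0 _ _)
              (dOpt_triangle hc hp hdb_nonneg hdb_tri _ _ _) hp0.le
          · refine add_nonneg ?_ ?_ <;> split <;>
              first | exact (h1 k hk').1 _ _ | exact (h2 k hk').1 _ _ | exact le_refl 0
    have hsw : γ ^ p / 2 * ∑ k ∈ Finset.range (T-1), ∑ i : Fin nX, ∑ j : Fin nY,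
        |compW (W1 k) (W2 k) i.castSucc j.castSucc
          - compW (W1 (k+1)) (W2 (k+1)) i.castSucc j.castSucc|
        ≤ (∑ k ∈ Finset.range (T-1), ∑ i : Fin nX, ∑ l : Fin nZ,
            |W1 k i.castSucc l.castSucc - W1 (k+1) i.castSucc l.castSucc| / 2 * γ ^ p)
          + ∑ k ∈ Finset.range (T-1), ∑ l : Fin nZ, ∑ j : Fin nY,
            |W2 k l.castSucc j.castSucc - W2 (k+1) l.castSucc j.castSucc| / 2 * γ ^ p := by
      rw [half_mul_sum3 (T-1)
        (fun (k : ℕ) (a : Fin nX) (b : Fin nZ) => |W1 k a.castSucc b.castSucc - W1 (k+1) a.castSucc b.castSucc|) (γ^p),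
        half_mul_sum3 (T-1)
        (fun (k : ℕ) (a : Fin nZ) (b : Fin nY) => |W2 k a.castSucc b.castSucc - W2 (k+1) a.castSucc b.castSucc|) (γ^p),
        ← mul_add]
      refine mul_le_mul_of_nonneg_left ?_ (by positivity)
      rw [← Finset.sum_add_distrib]
      refine Finset.sum_le_sum fun k hk => ?_
      have hk1 : k < T := by have := Finset.mem_range.1 hk; omega
      have hk2 : k + 1 < T := by have := Finset.mem_range.1 hk; omega
      have step1 : ∀ i : Fin nX, ∀ j : Fin nY,
          |compW (W1 k) (W2 k) i.castSucc j.castSucc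
            - compW (W1 (k+1)) (W2 (k+1)) i.castSucc j.castSucc|
          ≤ ∑ l : Fin nZ,
              (|W1 k i.castSucc l.castSucc - W1 (k+1) i.castSucc l.castSucc|
                  * W2 (k+1) l.castSucc j.castSucc
                + W1 k i.castSucc l.castSucc
                  * |W2 k l.castSucc j.castSucc - W2 (k+1) l.castSucc j.castSucc|) := by
        intro i j
        rw [compW_castSucc, compW_castSucc]
        simp only [compA]
        rw [← Finset.sum_sub_distrib]
        refine (Finset.abs_sum_le_sum_abs _ _).trans (Finset.sum_le_sum fun l _ => ?_)
        have hid : W1 k i.castSucc l.castSucc * W2 k l.castSucc j.castSucc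
            - W1 (k+1) i.castSucc l.castSucc * W2 (k+1) l.castSucc j.castSucc
            = (W1 k i.castSucc l.castSucc - W1 (k+1) i.castSucc l.castSucc)
                * W2 (k+1) l.castSucc j.castSucc
              + W1 k i.castSucc l.castSucc
                * (W2 k l.castSucc j.castSucc - W2 (k+1) l.castSucc j.castSucc) := by ring
        rw [hid]
        refine (abs_add_le _ _).trans ?_
        rw [abs_mul, abs_mul, abs_of_nonneg ((h2 (k+1) hk2).1 _ _),
          abs_of_nonneg ((h1 k hk1).1 _ _)]
      calc ∑ i : Fin nX, ∑ j : Fin nY,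
            |compW (W1 k) (W2 k) i.castSucc j.castSucc
              - compW (W1 (k+1)) (W2 (k+1)) i.castSucc j.castSucc|
          ≤ ∑ i : Fin nX, ∑ j : Fin nY, ∑ l : Fin nZ,
              (|W1 k i.castSucc l.castSucc - W1 (k+1) i.castSucc l.castSucc|
                  * W2 (k+1) l.castSucc j.castSucc
                + W1 k i.castSucc l.castSucc
                  * |W2 k l.castSucc j.castSucc - W2 (k+1) l.castSucc j.castSucc|) :=
            Finset.sum_le_sum fun i _ => Finset.sum_le_sum fun j _ => step1 i j
        _ = (∑ i : Fin nX, ∑ l : Fin nZ,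
              |W1 k i.castSucc l.castSucc - W1 (k+1) i.castSucc l.castSucc|
                * ∑ j : Fin nY, W2 (k+1) l.castSucc j.castSucc)
            + ∑ l : Fin nZ, ∑ j : Fin nY,
              |W2 k l.castSucc j.castSucc - W2 (k+1) l.castSucc j.castSucc|
                * ∑ i : Fin nX, W1 k i.castSucc l.castSucc := by
            simp only [Finset.sum_add_distrib]
            congr 1
            · refine Finset.sum_congr rfl fun i _ => ?_
              calc ∑ j : Fin nY, ∑ l : Fin nZ,
                    |W1 k i.castSucc l.castSucc - W1 (k+1) i.castSucc l.castSucc|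
                      * W2 (k+1) l.castSucc j.castSucc
                  = ∑ l : Fin nZ, ∑ j : Fin nY,
                    |W1 k i.castSucc l.castSucc - W1 (k+1) i.castSucc l.castSucc|
                      * W2 (k+1) l.castSucc j.castSucc := Finset.sum_comm
                _ = ∑ l : Fin nZ,
                    |W1 k i.castSucc l.castSucc - W1 (k+1) i.castSucc l.castSucc|
                      * ∑ j : Fin nY, W2 (k+1) l.castSucc j.castSucc :=
                  Finset.sum_congr rfl fun l _ => (Finset.mul_sum _ _ _).symm
            · calc ∑ i : Fin nX, ∑ j : Fin nY, ∑ l : Fin nZ,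
                    W1 k i.castSucc l.castSucc
                      * |W2 k l.castSucc j.castSucc - W2 (k+1) l.castSucc j.castSucc|
                  = ∑ l : Fin nZ, ∑ j : Fin nY, ∑ i : Fin nX,
                    W1 k i.castSucc l.castSucc
                      * |W2 k l.castSucc j.castSucc - W2 (k+1) l.castSucc j.castSucc| :=
                  sum3_rot _
                _ = ∑ l : Fin nZ, ∑ j : Fin nY,
                    |W2 k l.castSucc j.castSucc - W2 (k+1) l.castSucc j.castSucc|
                      * ∑ i : Fin nX, W1 k i.castSucc l.castSucc :=
                  Finset.sum_congr rfl fun l _ => Finset.sum_congr rfl fun j _ => by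
                    rw [← Finset.sum_mul, mul_comm]
        _ ≤ (∑ i : Fin nX, ∑ l : Fin nZ,
              |W1 k i.castSucc l.castSucc - W1 (k+1) i.castSucc l.castSucc|)
            + ∑ l : Fin nZ, ∑ j : Fin nY,
              |W2 k l.castSucc j.castSucc - W2 (k+1) l.castSucc j.castSucc| := by
            refine add_le_add ?_ ?_
            · refine Finset.sum_le_sum fun i _ => Finset.sum_le_sum fun l _ => ?_
              refine mul_le_of_le_one_right (abs_nonneg _) ?_
              have hfull := (h2 (k+1) hk2).2.2.1 l
              rw [Fin.sum_univ_castSucc] at hfull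
              have := (h2 (k+1) hk2).1 l.castSucc (Fin.last nY)
              linarith
            · refine Finset.sum_le_sum fun l _ => Finset.sum_le_sum fun j _ => ?_
              refine mul_le_of_le_one_right (abs_nonneg _) ?_
              have hfull := (h1 k hk1).2.1 l
              rw [Fin.sum_univ_castSucc] at hfull
              have := (h1 k hk1).1 (Fin.last nX) l.castSucc
              linarith
    linarith
  case nF =>
    have hd0p : ∀ x y, 0 ≤ dOpt db c p x y ^ p := fun x y => Real.rpow_nonneg (hd0 x y) p
    refine add_nonneg (Finset.sum_nonneg fun x hx => mul_nonneg (mul_nonneg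
      ((h1 x.1 (memA x T hx)).1 _ _) ((h2 x.1 (memA x T hx)).1 _ _)) (hd0p _ _))
      (add_nonneg ?_ (add_nonneg ?_ ?_))
    · refine Finset.sum_nonneg fun x hx => mul_nonneg ?_ (hd0p _ _)
      have hk := memA x T hx
      refine add_nonneg ?_ ?_ <;> split <;>
        first | exact (h1 x.1 hk).1 _ _ | exact (h2 x.1 hk).1 _ _ | exact le_refl 0
    · exact Finset.sum_nonneg fun x _ => mul_nonneg
        (div_nonneg (abs_nonneg _) (by norm_num)) (Real.rpow_nonneg hγ.le _)
    · exact Finset.sum_nonneg fun x _ => mul_nonneg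
        (div_nonneg (abs_nonneg _) (by norm_num)) (Real.rpow_nonneg (le_refl 0) _)
  case hSF =>
    simp only [lpCost, Finset.sum_product, Fintype.sum_prod_type]
    have eD : ∑ k ∈ Finset.range (T-1), ∑ l : Fin nZ, ∑ j : Fin nY,
        |W2 k l.castSucc j.castSucc - W2 (k+1) l.castSucc j.castSucc| / 2 * (0:ℝ) ^ p = 0 := by
      simp [Real.zero_rpow (ne_of_gt hp0)]
    rw [eD, add_zero]
    rw [half_mul_sum3 (T-1)
      (fun (k : ℕ) (a : Fin nX) (b : Fin nZ) => |W1 k a.castSucc b.castSucc - W1 (k+1) a.castSucc b.castSucc|) (γ^p)]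
    have eAB : (∑ k ∈ Finset.range T, ∑ i : Fin (nX+1), ∑ l : Fin nZ, ∑ j : Fin (nY+1),
          W1 k i l.castSucc * W2 k l.castSucc j
            * dOpt db c p (tauE X i k) (tauE Z l.castSucc k) ^ p)
        + (∑ k ∈ Finset.range T, ∑ i : Fin (nX+1), ∑ j : Fin (nY+1),
          compB (W1 k) (W2 k) i j * dOpt db c p (tauE X i k) (tauE Z (Fin.last nZ) k) ^ p)
        = ∑ k ∈ Finset.range T, ∑ i : Fin (nX+1), ∑ l : Fin (nZ+1),
          dOpt db c p (tauE X i k) (tauE Z l k) ^ p * W1 k i l := by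
      rw [← Finset.sum_add_distrib]
      refine Finset.sum_congr rfl fun k hk => ?_
      have hk' := Finset.mem_range.1 hk
      rw [← Finset.sum_add_distrib]
      refine Finset.sum_congr rfl fun i _ => ?_
      rw [Fin.sum_univ_castSucc
        (f := fun l => dOpt db c p (tauE X i k) (tauE Z l k) ^ p * W1 k i l)]
      congr 1
      · refine Finset.sum_congr rfl fun l _ => ?_
        calc ∑ j, W1 k i l.castSucc * W2 k l.castSucc j
              * dOpt db c p (tauE X i k) (tauE Z l.castSucc k) ^ p
            = (dOpt db c p (tauE X i k) (tauE Z l.castSucc k) ^ p * W1 k i l.castSucc)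
                * ∑ j, W2 k l.castSucc j := by
              rw [Finset.mul_sum]
              exact Finset.sum_congr rfl fun j _ => by ring
          _ = dOpt db c p (tauE X i k) (tauE Z l.castSucc k) ^ p * W1 k i l.castSucc := by
              rw [(h2 k hk').2.2.1 l, mul_one]
      · by_cases hi : i = Fin.last nX
        · subst hi
          have hz : dOpt db c p (tauE X (Fin.last nX) k) (tauE Z (Fin.last nZ) k) = 0 := by
            rw [tauE_last, tauE_last]; exact dOpt_none_none
          simp [hz, Real.zero_rpow (ne_of_gt hp0)]
        · have hsum : ∑ j, compB (W1 k) (W2 k) i j = W1 k i (Fin.last nZ) := by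
            simp [compB, Finset.sum_add_distrib, hi]
          calc ∑ j, compB (W1 k) (W2 k) i j
                * dOpt db c p (tauE X i k) (tauE Z (Fin.last nZ) k) ^ p
              = (∑ j, compB (W1 k) (W2 k) i j)
                  * dOpt db c p (tauE X i k) (tauE Z (Fin.last nZ) k) ^ p :=
                (Finset.sum_mul _ _ _).symm
            _ = dOpt db c p (tauE X i k) (tauE Z (Fin.last nZ) k) ^ p
                  * W1 k i (Fin.last nZ) := by rw [hsum, mul_comm]
    rw [← add_assoc, eAB]
  case nG =>
    have hd0p : ∀ x y, 0 ≤ dOpt db c p x y ^ p := fun x y => Real.rpow_nonneg (hd0 x y) p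
    refine add_nonneg (Finset.sum_nonneg fun x hx => mul_nonneg (mul_nonneg
      ((h1 x.1 (memA x T hx)).1 _ _) ((h2 x.1 (memA x T hx)).1 _ _)) (hd0p _ _))
      (add_nonneg ?_ (add_nonneg ?_ ?_))
    · refine Finset.sum_nonneg fun x hx => mul_nonneg ?_ (hd0p _ _)
      have hk := memA x T hx
      refine add_nonneg ?_ ?_ <;> split <;>
        first | exact (h1 x.1 hk).1 _ _ | exact (h2 x.1 hk).1 _ _ | exact le_refl 0
    · exact Finset.sum_nonneg fun x _ => mul_nonneg
        (div_nonneg (abs_nonneg _) (by norm_num)) (Real.rpow_nonneg (le_refl 0) _)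
    · exact Finset.sum_nonneg fun x _ => mul_nonneg
        (div_nonneg (abs_nonneg _) (by norm_num)) (Real.rpow_nonneg hγ.le _)
  case hSG =>
    simp only [lpCost, Finset.sum_product, Fintype.sum_prod_type]
    have eC : ∑ k ∈ Finset.range (T-1), ∑ i : Fin nX, ∑ l : Fin nZ,
        |W1 k i.castSucc l.castSucc - W1 (k+1) i.castSucc l.castSucc| / 2 * (0:ℝ) ^ p = 0 := by
      simp [Real.zero_rpow (ne_of_gt hp0)]
    rw [eC, zero_add]
    rw [half_mul_sum3 (T-1)
      (fun (k : ℕ) (a : Fin nZ) (b : Fin nY) => |W2 k a.castSucc b.castSucc - W2 (k+1) a.castSucc b.castSucc|) (γ^p)]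
    have eAB : (∑ k ∈ Finset.range T, ∑ i : Fin (nX+1), ∑ l : Fin nZ, ∑ j : Fin (nY+1),
          W1 k i l.castSucc * W2 k l.castSucc j
            * dOpt db c p (tauE Z l.castSucc k) (tauE Y j k) ^ p)
        + (∑ k ∈ Finset.range T, ∑ i : Fin (nX+1), ∑ j : Fin (nY+1),
          compB (W1 k) (W2 k) i j * dOpt db c p (tauE Z (Fin.last nZ) k) (tauE Y j k) ^ p)
        = ∑ k ∈ Finset.range T, ∑ l : Fin (nZ+1), ∑ j : Fin (nY+1),
          dOpt db c p (tauE Z l k) (tauE Y j k) ^ p * W2 k l j := by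
      rw [← Finset.sum_add_distrib]
      refine Finset.sum_congr rfl fun k hk => ?_
      have hk' := Finset.mem_range.1 hk
      rw [Fin.sum_univ_castSucc
        (f := fun l => ∑ j : Fin (nY+1), dOpt db c p (tauE Z l k) (tauE Y j k) ^ p * W2 k l j)]
      congr 1
      · rw [Finset.sum_comm]
        refine Finset.sum_congr rfl fun l _ => ?_
        rw [Finset.sum_comm]
        refine Finset.sum_congr rfl fun j _ => ?_
        calc ∑ i, W1 k i l.castSucc * W2 k l.castSucc j
              * dOpt db c p (tauE Z l.castSucc k) (tauE Y j k) ^ p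
            = (dOpt db c p (tauE Z l.castSucc k) (tauE Y j k) ^ p * W2 k l.castSucc j)
                * ∑ i, W1 k i l.castSucc := by
              rw [Finset.mul_sum]
              exact Finset.sum_congr rfl fun i _ => by ring
          _ = dOpt db c p (tauE Z l.castSucc k) (tauE Y j k) ^ p * W2 k l.castSucc j := by
              rw [(h1 k hk').2.1 l, mul_one]
      · rw [Finset.sum_comm]
        refine Finset.sum_congr rfl fun j _ => ?_
        by_cases hj : j = Fin.last nY
        · subst hj
          have hz : dOpt db c p (tauE Z (Fin.last nZ) k) (tauE Y (Fin.last nY) k) = 0 := by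
            rw [tauE_last, tauE_last]; exact dOpt_none_none
          simp [hz, Real.zero_rpow (ne_of_gt hp0)]
        · have hsum : ∑ i, compB (W1 k) (W2 k) i j = W2 k (Fin.last nZ) j := by
            simp [compB, Finset.sum_add_distrib, hj]
          calc ∑ i, compB (W1 k) (W2 k) i j
                * dOpt db c p (tauE Z (Fin.last nZ) k) (tauE Y j k) ^ p
              = (∑ i, compB (W1 k) (W2 k) i j)
                  * dOpt db c p (tauE Z (Fin.last nZ) k) (tauE Y j k) ^ p :=
                (Finset.sum_mul _ _ _).symm
            _ = dOpt db c p (tauE Z (Fin.last nZ) k) (tauE Y j k) ^ p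
                  * W2 k (Fin.last nZ) j := by rw [hsum, mul_comm]
    rw [← add_assoc, eAB]
/-- The LP relaxation distance satisfies the triangle inequality. -/
theorem lpDist_triangle {N nX nY nZ : ℕ} (db : (Fin N → ℝ) → (Fin N → ℝ) → ℝ)
    (c γ p : ℝ) (hc : 0 < c) (hγ : 0 < γ) (hp : 1 ≤ p)
    (hdb_nonneg : ∀ x y, 0 ≤ db x y)
    (hdb_eq : ∀ x y, db x y = 0 ↔ x = y)
    (hdb_symm : ∀ x y, db x y = db y x)
    (hdb_tri : ∀ x y z, db x z ≤ db x y + db y z)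
    (T : ℕ) (X : Fin nX → Traj N) (Y : Fin nY → Traj N) (Z : Fin nZ → Traj N) :
    lpDist db c γ p T X Y ≤ lpDist db c γ p T X Z + lpDist db c γ p T Z Y := by
  obtain ⟨hneXY, hbdXY⟩ := lpDist_nonempty_bdd db hc.le hγ.le hdb_nonneg T X Y
  obtain ⟨hneXZ, hbdXZ⟩ := lpDist_nonempty_bdd db hc.le hγ.le hdb_nonneg T X Z
  obtain ⟨hneZY, hbdZY⟩ := lpDist_nonempty_bdd db hc.le hγ.le hdb_nonneg T Z Y
  have step1 : ∀ b ∈ { v | ∃ W : ℕ → Matrix (Fin (nZ + 1)) (Fin (nY + 1)) ℝ,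
      (∀ k < T, memWbar (W k)) ∧ v = (lpCost db c γ p T Z Y W) ^ (1 / p) },
      lpDist db c γ p T X Y - b ≤ lpDist db c γ p T X Z := by
    rintro b ⟨W2, hW2, rfl⟩
    refine le_csInf hneXZ ?_
    rintro a ⟨W1, hW1, rfl⟩
    rw [sub_le_iff_le_add]
    calc lpDist db c γ p T X Y
        ≤ lpCost db c γ p T X Y (fun k => compW (W1 k) (W2 k)) ^ (1 / p) :=
          csInf_le ⟨0, hbdXY⟩ ⟨fun k => compW (W1 k) (W2 k),
            fun k hk => compW_mem (hW1 k hk) (hW2 k hk), rfl⟩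
      _ ≤ lpCost db c γ p T X Z W1 ^ (1 / p) + lpCost db c γ p T Z Y W2 ^ (1 / p) :=
          compose_le db hc hγ hp hdb_nonneg hdb_tri T X Y Z W1 W2 hW1 hW2
  have step2 : lpDist db c γ p T X Y - lpDist db c γ p T X Z ≤ lpDist db c γ p T Z Y := by
    refine le_csInf hneZY fun b hb => ?_
    have := step1 b hb
    linarith
  linarith
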